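/- arXiv:2504.15732 — 2 statements merged into one kernel-verified Lean document; each statement's English description precedes it below -/
import Mathlib

section
/- Let R be a commutative Noetherian integral domain that is not a field. If M is a divisible R-module (i.e. rM = M for every nonzero r in R) and N is a finitely generated R-module, then every R-linear map f : M → N is zero. -/
/-- Let `R` be a commutative Noetherian integral domain that is not a field. If `M` is a
divisible `R`-module and `N` a finitely generated `R`-module, every `R`-linear map
`f : M → N` is zero. -/
theorem stmt_0 {R : Type*} [CommRing R] [IsDomain R] [IsNoetherianRing R]
    (hR : ¬ IsField R)
    {M N : Type*} [AddCommGroup M] [Module R M] [AddCommGroup N] [Module R N]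
    (hdiv : ∀ r : R, r ≠ 0 → ∀ m : M, ∃ m' : M, r • m' = m)
    [Module.Finite R N]
    (f : M →ₗ[R] N) : f = 0 := by
  -- pick a nonzero nonunit r
  obtain ⟨r, hr0, hru⟩ : ∃ r : R, r ≠ 0 ∧ ¬ IsUnit r := by
    by_contra h
    push_neg at h
    exact hR ⟨exists_pair_ne R, mul_comm, fun {a} ha => (h a ha).exists_right_inv⟩
  have hNoeth : IsNoetherian R N := isNoetherian_of_isNoetherianRing_of_finite R N
  have hfg : (LinearMap.range f).FG := (isNoetherian_def.mp hNoeth _)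
  have hle : LinearMap.range f ≤ (Ideal.span {r}) • LinearMap.range f := by
    rintro n ⟨m, rfl⟩
    obtain ⟨m', hm'⟩ := hdiv r hr0 m
    rw [← hm', map_smul]
    exact Submodule.smul_mem_smul (Ideal.mem_span_singleton_self r) ⟨m', rfl⟩
  obtain ⟨x, hx1, hx0⟩ :=
    Submodule.exists_sub_one_mem_and_smul_eq_zero_of_fg_of_le_smul (Ideal.span {r})
      (LinearMap.range f) hfg hle
  have hxne : x ≠ 0 := by
    rintro rfl
    obtain ⟨a, ha⟩ := Ideal.mem_span_singleton'.mp hx1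
    exact hru (IsUnit.of_mul_eq_one (a := r) (-a) (by linear_combination -ha))
  ext m
  obtain ⟨m', hm'⟩ := hdiv x hxne m
  rw [LinearMap.zero_apply, ← hm', map_smul]
  exact hx0 _ ⟨m', rfl⟩
end

section
/- Let ℓ be a prime, let N and Q be abelian groups with N finitely generated, and let u : N → Q be a homomorphism with kernel P. If for every positive integer n the induced map N ⊗_ℤ ℤ/ℓⁿℤ → Q ⊗_ℤ ℤ/ℓⁿℤ is injective, then P has rank 0, i.e. P ⊗_ℤ ℚ = 0 (so P is a finite group). -/
open TensorProduct

lemma aux_div {N : Type*} [AddCommGroup N] (m : ℕ) (x : N)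
    (h : (x ⊗ₜ (1 : ZMod m) : N ⊗[ℤ] ZMod m) = 0) :
    ∃ y : N, (m : ℤ) • y = x := by
  set I : Ideal ℤ := Ideal.span {(m : ℤ)}
  set e1 : (ZMod m) ≃ₗ[ℤ] (ℤ ⧸ I) :=
    (Int.quotientSpanNatEquivZMod m).symm.toAddEquiv.toIntLinearEquiv with he1
  set e : (N ⊗[ℤ] ZMod m) ≃ₗ[ℤ] N ⧸ (I • (⊤ : Submodule ℤ N)) :=
    LinearEquiv.lTensor N e1 ≪≫ₗ tensorQuotEquivQuotSMul N I with he
  have h1 : e1 1 = Ideal.Quotient.mk I 1 := by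
    simp [he1, AddEquiv.toIntLinearEquiv]
  have h2 : e (x ⊗ₜ 1) = Submodule.Quotient.mk ((1:ℤ) • x) := by
    rw [he]
    have h3 : (LinearEquiv.lTensor N e1) (x ⊗ₜ (1 : ZMod m)) = x ⊗ₜ Ideal.Quotient.mk I 1 := by
      rw [LinearEquiv.lTensor_tmul, h1]
    exact (congrArg (tensorQuotEquivQuotSMul N I) h3).trans (tensorQuotEquivQuotSMul_tmul_mk I x 1)
  rw [h] at h2
  simp only [map_zero, one_smul] at h2
  have hx : x ∈ I • (⊤ : Submodule ℤ N) := by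
    rwa [eq_comm, Submodule.Quotient.mk_eq_zero] at h2
  rw [Submodule.ideal_span_singleton_smul, ← SetLike.mem_coe,
    Submodule.coe_pointwise_smul] at hx
  obtain ⟨y, -, hy⟩ := Set.mem_smul_set.mp hx
  exact ⟨y, hy⟩

lemma aux_tors {N : Type*} [AddCommGroup N] (hfg : AddGroup.FG N) (ℓ : ℕ) (hℓ : 2 ≤ ℓ)
    (x : N) (hdiv : ∀ n : ℕ, 0 < n → ∃ y : N, ((ℓ ^ n : ℕ) : ℤ) • y = x) :
    ∃ k : ℕ, 0 < k ∧ k • x = 0 := by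
  have : Module.Finite ℤ N := Module.Finite.iff_addGroup_fg.mpr hfg
  set T := Submodule.torsion ℤ N with hT
  set z : N ⧸ T := Submodule.Quotient.mk x with hz
  have hz0 : z = 0 := by
    set b := Module.Free.chooseBasis ℤ (N ⧸ T) with hb
    have hrepr : ∀ i, b.repr z i = 0 := by
      intro i
      by_contra hc
      obtain ⟨n, hn⟩ := pow_unbounded_of_one_lt ((b.repr z i).natAbs) (by omega : 1 < ℓ)
      obtain ⟨y, hy⟩ := hdiv (n + 1) (Nat.succ_pos n)
      have heq : b.repr z i = ((ℓ ^ (n+1) : ℕ) : ℤ) * b.repr (Submodule.Quotient.mk y) i := by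
        rw [hz, ← hy, Submodule.Quotient.mk_smul, map_smul, Finsupp.smul_apply, smul_eq_mul]
      have hdvd : (ℓ ^ (n+1) : ℕ) ∣ (b.repr z i).natAbs := by
        refine ⟨(b.repr (Submodule.Quotient.mk y) i).natAbs, ?_⟩
        rw [heq, Int.natAbs_mul, Int.natAbs_natCast]
      have hle := Nat.le_of_dvd (Int.natAbs_pos.mpr hc) hdvd
      have : (ℓ:ℕ) ^ n ≤ ℓ ^ (n+1) := Nat.pow_le_pow_right (by omega) (by omega)
      omega
    have : b.repr z = 0 := Finsupp.ext hrepr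
    exact b.repr.map_eq_zero_iff.mp this
  have hxT : x ∈ T := (Submodule.Quotient.mk_eq_zero T).mp hz0
  obtain ⟨a, ha⟩ := hxT
  have ha' : (a : ℤ) • x = 0 := ha
  have ha0 : (a : ℤ) ≠ 0 := nonZeroDivisors.coe_ne_zero a
  refine ⟨(a : ℤ).natAbs, Int.natAbs_pos.mpr ha0, ?_⟩
  have habs : ((a : ℤ).natAbs : ℤ) • x = 0 := by
    rcases Int.natAbs_eq (a : ℤ) with h | h
    · rw [← h]; exact ha'
    · have h2 : ((a : ℤ).natAbs : ℤ) = -(a : ℤ) := by omega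
      rw [h2, neg_smul, ha', neg_zero]
  rw [natCast_zsmul] at habs
  exact habs

/-- Let `ℓ` be a prime, `N` a finitely generated abelian group, `u : N → Q` a homomorphism
of abelian groups with kernel `P`. If for every positive integer `n` the induced map
`N ⊗ ℤ/ℓⁿℤ → Q ⊗ ℤ/ℓⁿℤ` is injective, then `P` has rank `0`, i.e. `ℚ ⊗ P = 0` (so `P` is a
finite group). -/
theorem stmt_6 (ℓ : ℕ) (hℓ : Nat.Prime ℓ) {N Q : Type*} [AddCommGroup N] [AddCommGroup Q]
    (hfg : AddGroup.FG N) (u : N →+ Q)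
    (hinj : ∀ n : ℕ, 0 < n →
      Function.Injective
        (TensorProduct.map u.toIntLinearMap
          (LinearMap.id : ZMod (ℓ ^ n) →ₗ[ℤ] ZMod (ℓ ^ n)))) :
    Subsingleton (ℚ ⊗[ℤ] u.ker) ∧ Finite u.ker := by
  -- every element of the kernel is torsion
  have key : ∀ x : N, x ∈ u.ker → ∃ k : ℕ, 0 < k ∧ k • x = 0 := by
    intro x hx
    refine aux_tors hfg ℓ hℓ.two_le x fun n hn => ?_
    refine aux_div (ℓ ^ n) x ?_
    apply hinj n hn
    rw [map_zero, TensorProduct.map_tmul]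
    simp only [LinearMap.id_coe, id_eq, AddMonoidHom.coe_toIntLinearMap]
    have hux : u x = 0 := by simpa [AddMonoidHom.mem_ker] using hx
    rw [hux, TensorProduct.zero_tmul]
  have htors : ∀ p : u.ker, ∃ k : ℕ, 0 < k ∧ k • p = 0 := by
    intro p
    obtain ⟨k, hk, hkp⟩ := key p.1 p.2
    exact ⟨k, hk, by ext; exact_mod_cast hkp⟩
  have hfin : Finite u.ker := by
    have : Module.Finite ℤ N := Module.Finite.iff_addGroup_fg.mpr hfg
    have hker : AddGroup.FG u.ker := by
      have h1 : Module.Finite ℤ (AddSubgroup.toIntSubmodule u.ker : Submodule ℤ N) :=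
        Module.Finite.iff_fg.mpr (IsNoetherian.noetherian _)
      exact Module.Finite.iff_addGroup_fg.mp h1
    refine AddCommGroup.finite_of_fg_torsion _ ?_
    intro p
    obtain ⟨k, hk, hkp⟩ := htors p
    exact isOfFinAddOrder_iff_nsmul_eq_zero.mpr ⟨k, hk, hkp⟩
  refine ⟨?_, hfin⟩
  constructor
  intro a b
  suffices h : ∀ c : ℚ ⊗[ℤ] u.ker, c = 0 by rw [h a, h b]
  intro c
  induction c using TensorProduct.induction_on with
  | zero => rfl
  | tmul q p =>
    obtain ⟨k, hk, hkp⟩ := htors p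
    have : q ⊗ₜ[ℤ] p = ((k : ℤ) • (q / k)) ⊗ₜ[ℤ] p := by
      congr 1
      rw [zsmul_eq_mul]
      push_cast
      field_simp
    rw [this, TensorProduct.smul_tmul, natCast_zsmul, hkp, TensorProduct.tmul_zero]
  | add s t hs ht => rw [hs, ht, add_zero]
end
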